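/- With S_{λ,μ} = |z|^{-1} Y_{λ,μ} and T_{λ,μ} = e^{-πic/12} ω_λ δ_{λ,μ}, where z = Σ_λ d_λ² ω_λ ≠ 0 and c = 4·arg(z)/π, the matrices satisfy the partial Verlinde relations T S T S T = S, C T C = T, C S C = S, and T*T = 1, where C is the conjugation matrix C_{λ,μ} = δ_{λ,μ̄}. -/

import Mathlib

open Matrix

/-- With `S = |z|⁻¹ Y` and `T = e^{-πic/12} diag(ω)`, where
`z = ∑_λ d_λ² ω_λ ≠ 0` and `c = 4 arg(z)/π`, the matrices obey the partial
Verlinde modular algebra `TSTST = S`, `CTC = T`, `CSC = S`, `T*T = 1`,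
with `C` the conjugation matrix `C_{λ,μ} = δ_{λ,μ̄}`. -/
theorem partial_Verlinde_modular_algebra
    {Δ : Type*} [Fintype Δ] [DecidableEq Δ] (z0 : Δ) (bar : Δ → Δ)
    (Nc : Δ → Δ → Δ → ℕ) (d : Δ → ℝ) (ω : Δ → ℂ) (Y : Δ → Δ → ℂ)
    (hNcomm : ∀ l m n, Nc l m n = Nc m l n)
    (hNid : ∀ l m, Nc z0 l m = if l = m then 1 else 0)
    (hFrob : ∀ l m n, Nc l m n = Nc (bar l) n m ∧ Nc l m n = Nc n (bar m) l)
    (hassoc : ∀ l n r s, ∑ m, Nc l m n * Nc r s m = ∑ t, Nc l r t * Nc t s n)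
    (hbarbar : ∀ l, bar (bar l) = l)
    (hd : ∀ l, 0 < d l) (hd0 : d z0 = 1) (hdbar : ∀ l, d (bar l) = d l)
    (hdim : ∀ l m, ∑ n, (Nc l m n : ℝ) * d n = d l * d m)
    (hω : ∀ l, ‖ω l‖ = 1) (hω0 : ω z0 = 1) (hωbar : ∀ l, ω (bar l) = ω l)
    (hY : ∀ m n, Y m n = ∑ l, (ω m * ω n / ω l) * (Nc m n l : ℂ) * (d l : ℂ))
    (hYsym : ∀ l m, Y l m = Y m l)
    (hYconj : ∀ l m, star (Y (bar l) m) = Y l m)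
    (hYprod : ∀ n m r, Y n r * Y m r = (d r : ℂ) * ∑ l, (Nc m n l : ℂ) * Y r l)
    (hz : (∑ l, (d l : ℂ) ^ 2 * ω l) ≠ 0) :
    let z : ℂ := ∑ l, (d l : ℂ) ^ 2 * ω l
    let c : ℝ := 4 * z.arg / Real.pi
    let S : Matrix Δ Δ ℂ := Matrix.of fun l m => Y l m / (‖z‖ : ℂ)
    let T : Matrix Δ Δ ℂ := Matrix.of fun l m =>
      Complex.exp (-(Real.pi * Complex.I * c) / 12) * ω l * (if l = m then 1 else 0)
    let C : Matrix Δ Δ ℂ := Matrix.of fun l m => if l = bar m then 1 else 0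
    T * S * T * S * T = S ∧ C * T * C = T ∧ C * S * C = S ∧ Tᴴ * T = 1 := by
  intro z c S T C
  have hzc : z = ∑ l, (d l : ℂ) ^ 2 * ω l := rfl
  have habs : (‖z‖ : ℂ) ≠ 0 := by
    simpa using hz
  have hωne : ∀ l, ω l ≠ 0 := by
    intro l h
    have := hω l
    rw [h] at this
    simp at this
  have hωmul : ∀ l, star (ω l) * ω l = 1 := by
    intro l
    rw [Complex.star_def, mul_comm, Complex.mul_conj, Complex.normSq_eq_norm_sq, hω l]
    norm_num
  have hωconj : ∀ l, (starRingEnd ℂ) (ω l) = (ω l)⁻¹ := by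
    intro l
    exact eq_inv_of_mul_eq_one_left (hωmul l)
  have hbarinv : Function.Involutive bar := hbarbar
  have hYconj' : ∀ l m, (starRingEnd ℂ) (Y (bar l) m) = Y l m := hYconj
  have hzconj : (starRingEnd ℂ) z = ∑ l, (d l : ℂ) ^ 2 * (ω l)⁻¹ := by
    rw [hzc, map_sum]
    refine Finset.sum_congr rfl fun l _ => ?_
    rw [_root_.map_mul, map_pow, Complex.conj_ofReal, hωconj]
  have hdimC : ∀ κ ρ, ∑ ν, (Nc ν κ ρ : ℂ) * (d ν : ℂ) = (d ρ : ℂ) * (d κ : ℂ) := by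
    intro κ ρ
    have h2 : ∑ ν, (Nc ρ (bar κ) ν : ℝ) * d ν = d ρ * d κ := by
      rw [hdim, hdbar]
    calc ∑ ν, (Nc ν κ ρ : ℂ) * (d ν : ℂ)
        = ∑ ν, (Nc ρ (bar κ) ν : ℂ) * (d ν : ℂ) := by
          refine Finset.sum_congr rfl fun ν _ => ?_
          rw [(hFrob ν κ ρ).2]
      _ = (d ρ : ℂ) * (d κ : ℂ) := by exact_mod_cast h2
  -- Lemma A : ∑ d ν ω ν⁻¹ Y ν κ = conj z * ω κ * d κ
  have hA : ∀ κ, ∑ ν, (d ν : ℂ) * (ω ν)⁻¹ * Y ν κ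
      = (starRingEnd ℂ) z * (ω κ * (d κ : ℂ)) := by
    intro κ
    calc ∑ ν, (d ν : ℂ) * (ω ν)⁻¹ * Y ν κ
        = ∑ ν, ∑ ρ, (d ν : ℂ) * (ω ν)⁻¹ *
            ((ω ν * ω κ / ω ρ) * (Nc ν κ ρ : ℂ) * (d ρ : ℂ)) := by
          refine Finset.sum_congr rfl fun ν _ => ?_
          rw [hY ν κ, Finset.mul_sum]
      _ = ∑ ρ, ∑ ν, (ω κ / ω ρ) * (d ρ : ℂ) * ((Nc ν κ ρ : ℂ) * (d ν : ℂ)) := by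
          rw [Finset.sum_comm]
          refine Finset.sum_congr rfl fun ρ _ => Finset.sum_congr rfl fun ν _ => ?_
          field_simp [hωne ν, hωne ρ]
      _ = ∑ ρ, (ω κ / ω ρ) * (d ρ : ℂ) * ((d ρ : ℂ) * (d κ : ℂ)) := by
          refine Finset.sum_congr rfl fun ρ _ => ?_
          rw [← Finset.mul_sum, hdimC κ ρ]
      _ = (∑ ρ, (d ρ : ℂ) ^ 2 * (ω ρ)⁻¹) * (ω κ * (d κ : ℂ)) := by
          rw [Finset.sum_mul]
          refine Finset.sum_congr rfl fun ρ _ => ?_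
          field_simp [hωne ρ]
      _ = (starRingEnd ℂ) z * (ω κ * (d κ : ℂ)) := by rw [hzconj]
  -- Lemma B : ∑ d ν ω ν Y ν κ = z * ω κ⁻¹ * d κ
  have hB : ∀ κ, ∑ ν, (d ν : ℂ) * ω ν * Y ν κ = z * (ω κ)⁻¹ * (d κ : ℂ) := by
    intro κ
    have h1 : ∑ ν, (d ν : ℂ) * ω ν * Y ν κ
        = (starRingEnd ℂ) (∑ ν, (d ν : ℂ) * (ω ν)⁻¹ * Y (bar ν) κ) := by
      rw [map_sum]
      refine Finset.sum_congr rfl fun ν _ => ?_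
      rw [_root_.map_mul, _root_.map_mul, Complex.conj_ofReal, hYconj' ν κ, map_inv₀, hωconj, inv_inv]
    have h2 : ∑ ν, (d ν : ℂ) * (ω ν)⁻¹ * Y (bar ν) κ
        = ∑ ν, (d ν : ℂ) * (ω ν)⁻¹ * Y ν κ := by
      calc ∑ ν, (d ν : ℂ) * (ω ν)⁻¹ * Y (bar ν) κ
          = ∑ ν, (d (bar ν) : ℂ) * (ω (bar ν))⁻¹ * Y (bar ν) κ := by
            refine Finset.sum_congr rfl fun ν _ => ?_
            rw [hdbar, hωbar]
        _ = ∑ ν, (d ν : ℂ) * (ω ν)⁻¹ * Y ν κ :=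
            Equiv.sum_comp (hbarinv.toPerm) (fun ν => (d ν : ℂ) * (ω ν)⁻¹ * Y ν κ)
    rw [h1, h2, hA κ, _root_.map_mul, Complex.conj_conj, _root_.map_mul, hωconj, Complex.conj_ofReal]
    ring
  -- Lemma C : ω l ω m ∑ ω ν Y l ν Y m ν = z Y l m
  have hCsum : ∀ l m, ω l * ω m * ∑ ν, ω ν * (Y l ν * Y m ν) = z * Y l m := by
    intro l m
    have hstep : ∑ ν, ω ν * (Y l ν * Y m ν)
        = ∑ κ, (Nc m l κ : ℂ) * ∑ ν, (d ν : ℂ) * ω ν * Y ν κ := by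
      calc ∑ ν, ω ν * (Y l ν * Y m ν)
          = ∑ ν, ∑ κ, (Nc m l κ : ℂ) * ((d ν : ℂ) * ω ν * Y ν κ) := by
            refine Finset.sum_congr rfl fun ν _ => ?_
            rw [hYprod l m ν, Finset.mul_sum, Finset.mul_sum]
            exact Finset.sum_congr rfl fun κ _ => by ring
        _ = ∑ κ, (Nc m l κ : ℂ) * ∑ ν, (d ν : ℂ) * ω ν * Y ν κ := by
            rw [Finset.sum_comm]
            exact Finset.sum_congr rfl fun κ _ => (Finset.mul_sum _ _ _).symm
    calc ω l * ω m * ∑ ν, ω ν * (Y l ν * Y m ν)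
        = ω l * ω m * ∑ κ, (Nc m l κ : ℂ) * (z * (ω κ)⁻¹ * (d κ : ℂ)) := by
          rw [hstep]
          congr 1
          exact Finset.sum_congr rfl fun κ _ => by rw [hB κ]
      _ = z * ∑ κ, (ω m * ω l / ω κ) * (Nc m l κ : ℂ) * (d κ : ℂ) := by
          rw [Finset.mul_sum, Finset.mul_sum]
          refine Finset.sum_congr rfl fun κ _ => ?_
          field_simp [hωne κ]
      _ = z * Y m l := by rw [hY m l]
      _ = z * Y l m := by rw [hYsym]
  -- phase facts
  set t : ℂ := Complex.exp (-(Real.pi * Complex.I * c) / 12) with ht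
  have hc : (c : ℝ) * Real.pi = 4 * z.arg := by
    simp only [c]
    field_simp
  have hc' : (c : ℂ) * (Real.pi : ℂ) = 4 * (z.arg : ℂ) := by exact_mod_cast hc
  have ht3 : t ^ 3 = Complex.exp (-(z.arg : ℂ) * Complex.I) := by
    rw [ht, ← Complex.exp_nat_mul]
    congr 1
    push_cast
    linear_combination (-(Complex.I) / 4) * hc'
  have ht3z : t ^ 3 * z = (‖z‖ : ℂ) := by
    have habsz := Complex.norm_mul_exp_arg_mul_I z
    have hef : Complex.exp ((z.arg : ℂ) * Complex.I) *
        Complex.exp (-(z.arg : ℂ) * Complex.I) = 1 := by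
      rw [← Complex.exp_add,
        show (z.arg : ℂ) * Complex.I + -(z.arg : ℂ) * Complex.I = 0 by ring,
        Complex.exp_zero]
    rw [ht3]
    calc Complex.exp (-(z.arg : ℂ) * Complex.I) * z
        = Complex.exp (-(z.arg : ℂ) * Complex.I) *
            ((‖z‖ : ℂ) * Complex.exp ((z.arg : ℂ) * Complex.I)) := by rw [habsz]
      _ = (‖z‖ : ℂ) *
            (Complex.exp ((z.arg : ℂ) * Complex.I) * Complex.exp (-(z.arg : ℂ) * Complex.I)) := by
          ring
      _ = (‖z‖ : ℂ) := by rw [hef, mul_one]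
  have hstart : star t * t = 1 := by
    have hconj : (starRingEnd ℂ) (-(Real.pi * Complex.I * (c : ℂ)) / 12)
        = (Real.pi * Complex.I * (c : ℂ)) / 12 := by
      rw [map_div₀, map_neg, _root_.map_mul, _root_.map_mul, Complex.conj_I,
        Complex.conj_ofReal, Complex.conj_ofReal, map_ofNat]
      ring
    rw [ht, Complex.star_def, ← Complex.exp_conj, ← Complex.exp_add, hconj]
    rw [show (Real.pi * Complex.I * (c : ℂ)) / 12 + -(Real.pi * Complex.I * (c : ℂ)) / 12
      = 0 by ring]
    exact Complex.exp_zero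
  -- matrix entry lemmas
  have hTmul : ∀ (M : Matrix Δ Δ ℂ) a b, (T * M) a b = t * ω a * M a b := by
    intro M a b
    simp only [Matrix.mul_apply, T, Matrix.of_apply, ht]
    simp [mul_ite, ite_mul, Finset.sum_ite_eq]
  have hmulT : ∀ (M : Matrix Δ Δ ℂ) a b, (M * T) a b = M a b * (t * ω b) := by
    intro M a b
    simp only [Matrix.mul_apply, T, Matrix.of_apply, ht]
    rw [Finset.sum_eq_single b]
    · simp
    · intro k _ hk
      rw [if_neg hk]
      ring
    · simp
  have hCMC : ∀ (M : Matrix Δ Δ ℂ) l m, (C * M * C) l m = M (bar l) (bar m) := by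
    intro M l m
    have h1 : ∀ b, (C * M) l b = M (bar l) b := by
      intro b
      rw [Matrix.mul_apply, Finset.sum_eq_single (bar l)]
      · simp [C, hbarbar]
      · intro a _ ha
        simp only [C, Matrix.of_apply]
        rw [if_neg, zero_mul]
        intro h
        exact ha (by rw [h, hbarbar])
      · simp
    rw [Matrix.mul_apply]
    simp only [h1, C, Matrix.of_apply]
    rw [Finset.sum_eq_single (bar m)]
    · simp
    · intro b _ hb
      rw [if_neg hb, mul_zero]
    · simp
  have hYbb : ∀ l m, Y (bar l) (bar m) = Y l m := by
    intro l m
    have h1 := hYconj l (bar m)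
    have h2 := hYconj m l
    calc Y (bar l) (bar m) = star (Y l (bar m)) := by rw [← h1, star_star]
      _ = star (Y (bar m) l) := by rw [hYsym l (bar m)]
      _ = Y m l := h2
      _ = Y l m := hYsym m l
  refine ⟨?_, ?_, ?_, ?_⟩
  · -- TSTST = S
    ext l m
    have key : (T * S * T * S * T) l m
        = t ^ 3 * ω l * ω m * ∑ ν, ω ν * (S l ν * S ν m) := by
      calc (T * S * T * S * T) l m
          = (∑ ν, (T * S * T) l ν * S ν m) * (t * ω m) := by
            rw [hmulT, Matrix.mul_apply]
        _ = (∑ ν, t * ω l * S l ν * (t * ω ν) * S ν m) * (t * ω m) := by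
            congr 1
            refine Finset.sum_congr rfl fun ν _ => ?_
            rw [hmulT, hTmul]
        _ = t ^ 3 * ω l * ω m * ∑ ν, ω ν * (S l ν * S ν m) := by
            rw [Finset.sum_mul, Finset.mul_sum]
            exact Finset.sum_congr rfl fun ν _ => by ring
    rw [key]
    have hsum : ∑ ν, ω ν * (S l ν * S ν m)
        = (∑ ν, ω ν * (Y l ν * Y m ν)) / (‖z‖ : ℂ) ^ 2 := by
      rw [Finset.sum_div]
      refine Finset.sum_congr rfl fun ν _ => ?_
      simp only [S, Matrix.of_apply]
      rw [hYsym ν m]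
      ring
    rw [hsum]
    have h3 : t ^ 3 * (ω l * ω m * ∑ ν, ω ν * (Y l ν * Y m ν))
        = (‖z‖ : ℂ) * Y l m := by
      rw [hCsum l m, ← mul_assoc, ht3z]
    simp only [S, Matrix.of_apply]
    field_simp
    linear_combination (norm := ring_nf) h3
  · -- CTC = T
    ext l m
    rw [hCMC]
    simp only [T, Matrix.of_apply, hωbar, hbarinv.injective.eq_iff]
  · -- CSC = S
    ext l m
    rw [hCMC]
    simp only [S, Matrix.of_apply, hYbb]
  · -- Tᴴ T = 1
    ext l m
    rw [Matrix.mul_apply, Finset.sum_eq_single l]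
    · simp only [Matrix.conjTranspose_apply, T, Matrix.of_apply, Matrix.one_apply,
        if_true, mul_one]
      rcases eq_or_ne l m with h | h
      · subst h
        rw [if_pos (rfl : l = l), mul_one]
        calc star (t * ω l) * (t * ω l)
            = (star t * t) * (star (ω l) * ω l) := by
              rw [star_mul']
              ring
          _ = 1 := by rw [hstart, hωmul, mul_one]
      · simp [h]
    · intro a _ ha
      simp only [Matrix.conjTranspose_apply, T, Matrix.of_apply, if_neg ha, mul_zero,
        star_zero, zero_mul]
    · simp
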